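/- Suppose the integer k ≥ 0 satisfies ν := k − n/2 + 1 > 0 (equivalently k > n/2 − 1). Then the steady-state density has a finite limit at the origin: 𝒜_k(z) → (μ(λB)^k / (k! (4πD)^{n/2})) · Γ(ν) · λ^{−ν} as z → 0⁺, where Γ is the Gamma function. -/

import Mathlib

open Real MeasureTheory Set Filter Topology

/-- The steady-state generation-`k` density in the normalized distance
`z = |x|√(λ/D)` from the origin:
`𝒜_k(z) = (μ(λB)^k/(k!(4πD)^{n/2})) ∫₀^∞ s^{k−n/2} exp(−λs − z²/(4λs)) ds`. -/
noncomputable def steadyDensity (n : ℕ) (lam D B mu : ℝ) (k : ℕ) (z : ℝ) : ℝ :=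
  (mu * (lam * B) ^ k / ((Nat.factorial k : ℝ) * (4 * π * D) ^ ((n : ℝ) / 2))) *
    ∫ s in Set.Ioi (0:ℝ),
      s ^ ((k : ℝ) - (n : ℝ) / 2) * Real.exp (-lam * s - z ^ 2 / (4 * lam * s))

/-- If `ν = k − n/2 + 1 > 0`, then
`𝒜_k(z) → (μ(λB)^k/(k!(4πD)^{n/2})) Γ(ν) λ^{−ν}` as `z → 0⁺`. -/
theorem steadyDensity_finite_at_origin
    (n : ℕ) (hn : 1 ≤ n) (lam D B mu : ℝ)
    (hlam : 0 < lam) (hD : 0 < D) (hB : 0 < B) (hmu : 0 < mu)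
    (k : ℕ) (hnu : 0 < (k : ℝ) - (n : ℝ) / 2 + 1) :
    Filter.Tendsto (steadyDensity n lam D B mu k) (nhdsWithin 0 (Set.Ioi 0))
      (nhds ((mu * (lam * B) ^ k / ((Nat.factorial k : ℝ) * (4 * π * D) ^ ((n : ℝ) / 2))) *
        Real.Gamma ((k : ℝ) - (n : ℝ) / 2 + 1) *
        lam ^ (-((k : ℝ) - (n : ℝ) / 2 + 1)))) := by
  set a : ℝ := (k : ℝ) - (n : ℝ) / 2 with ha
  set C : ℝ := mu * (lam * B) ^ k / ((Nat.factorial k : ℝ) * (4 * π * D) ^ ((n : ℝ) / 2))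
  have ha1 : -1 < a := by linarith
  have hbound_int : IntegrableOn (fun s : ℝ => s ^ a * Real.exp (-lam * s)) (Ioi 0) := by
    have := integrableOn_rpow_mul_exp_neg_mul_rpow (p := 1) ha1 one_pos hlam
    simpa [Real.rpow_one] using this
  have hval : ∫ s in Ioi (0:ℝ), s ^ a * Real.exp (-lam * s)
      = Real.Gamma (a + 1) * lam ^ (-(a + 1)) := by
    have h := integral_rpow_mul_exp_neg_mul_Ioi hnu hlam
    rw [show a + 1 - 1 = a by ring] at h
    simp only [neg_mul]
    rw [h, one_div, Real.inv_rpow hlam.le, ← Real.rpow_neg hlam.le, mul_comm]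
  have key : Tendsto (fun z : ℝ => ∫ s in Ioi (0:ℝ),
        s ^ a * Real.exp (-lam * s - z ^ 2 / (4 * lam * s)))
      (nhdsWithin 0 (Ioi 0)) (nhds (Real.Gamma (a + 1) * lam ^ (-(a + 1)))) := by
    rw [← hval]
    apply tendsto_integral_filter_of_dominated_convergence
      (fun s : ℝ => s ^ a * Real.exp (-lam * s))
    · filter_upwards with z
      apply ContinuousOn.aestronglyMeasurable _ measurableSet_Ioi
      apply ContinuousOn.mul
      · exact continuousOn_id.rpow_const (fun x hx => Or.inl (ne_of_gt hx))
      · apply Real.continuous_exp.comp_continuousOn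
        apply ContinuousOn.sub (Continuous.continuousOn (by continuity))
        apply ContinuousOn.div continuousOn_const (Continuous.continuousOn (by continuity))
        intro x hx
        have : (0:ℝ) < x := hx
        positivity
    · filter_upwards with z
      filter_upwards [self_mem_ae_restrict measurableSet_Ioi] with s hs
      have hs0 : (0:ℝ) < s := hs
      rw [norm_mul, Real.norm_eq_abs, Real.norm_eq_abs, abs_of_nonneg (Real.rpow_nonneg hs0.le _),
        abs_of_nonneg (Real.exp_pos _).le]
      gcongr
      have : 0 ≤ z ^ 2 / (4 * lam * s) := by positivity
      linarith
    · exact hbound_int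
    · filter_upwards [self_mem_ae_restrict measurableSet_Ioi] with s hs
      have hs0 : (0:ℝ) < s := hs
      have hc : Continuous fun z : ℝ => s ^ a * Real.exp (-lam * s - z ^ 2 / (4 * lam * s)) := by
        continuity
      have := (hc.tendsto 0).mono_left (nhdsWithin_le_nhds (s := Ioi 0))
      simpa using this
  rw [mul_assoc]
  exact key.const_mul C
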